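/- Let E be a countable set, h > 0, and a ∈ ℓ²(E, ℂ). Then for every real p with 1 ≤ p < ∞, each ℓ_{a,F_n} belongs to L^p(ℝ^E, μ_{E,h}^K) and the sequence (ℓ_{a,F_n})_{n≥0} converges in L^p(μ_{E,h}^K) (to the function ℓ_a that is its L² limit). (Theorem 2.6, L^p part.) -/

import Mathlib

open MeasureTheory ProbabilityTheory Filter
open scoped NNReal ENNReal
open Real

/-- `ℓ_{a,S}(x) = ∑_{j∈S} a_j x_j`. -/
noncomputable def ellSum {E : Type*} (a : E → ℂ) (S : Finset E) (x : E → ℝ) : ℂ :=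
  ∑ j ∈ S, a j * (x j : ℂ)


lemma real_exp_quad_integrable {b : ℝ} (hb : 0 < b) (c : ℝ) :
    Integrable (fun x : ℝ => Real.exp (-b * x ^ 2 + c * x)) volume := by
  have key := (integrable_cexp_quadratic (b := (b:ℂ)) (by simpa using hb) (c:ℂ) 0).norm
  simpa [← Complex.ofReal_pow, ← Complex.ofReal_mul, ← Complex.ofReal_neg,
    ← Complex.ofReal_add, Complex.norm_exp_ofReal] using key

lemma real_exp_quad_integral {b : ℝ} (hb : 0 < b) (c : ℝ) :
    ∫ x : ℝ, Real.exp (-b * x ^ 2 + c * x) = Real.sqrt (π / b) * Real.exp (c ^ 2 / (4 * b)) := by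
  have key := integral_cexp_quadratic (b := -(b:ℂ)) (by simpa using hb) (c:ℂ) 0
  have lhs : (fun x : ℝ => Complex.exp (-(b:ℂ) * x ^ 2 + c * x + 0))
      = fun x : ℝ => ((Real.exp (-b * x ^ 2 + c * x) : ℝ) : ℂ) := by
    funext x; rw [Complex.ofReal_exp]; push_cast; ring_nf
  have hInt : (∫ x : ℝ, ((Real.exp (-b * x ^ 2 + c * x) : ℝ) : ℂ))
      = ((∫ x : ℝ, Real.exp (-b * x ^ 2 + c * x) : ℝ) : ℂ) := integral_ofReal
  rw [lhs, hInt] at key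
  have rhs : ((π : ℂ) / -(-(b:ℂ))) ^ (1/2 : ℂ) * Complex.exp (0 - (c:ℂ) ^ 2 / (4 * -(b:ℂ)))
      = ((Real.sqrt (π / b) * Real.exp (c ^ 2 / (4 * b)) : ℝ) : ℂ) := by
    have h1 : ((π : ℂ) / -(-(b:ℂ))) = ((π / b : ℝ) : ℂ) := by push_cast; ring
    have h2 : ((0:ℂ) - (c:ℂ) ^ 2 / (4 * -(b:ℂ))) = ((c ^ 2 / (4 * b) : ℝ) : ℂ) := by
      have : (b:ℂ) ≠ 0 := by exact_mod_cast hb.ne'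
      push_cast
      field_simp
      ring
    rw [h1, h2, ← Complex.ofReal_exp,
      show ((1:ℂ)/2) = ((1/2 : ℝ) : ℂ) by norm_num,
      ← Complex.ofReal_cpow (by positivity) (1/2 : ℝ)]
    push_cast [← Real.sqrt_eq_rpow]
    ring
  rw [rhs] at key
  exact_mod_cast key

section
variable {b : ℝ}

lemma pdf_mul_exp (v : ℝ≥0) (hv : 0 < (v:ℝ)) (c x : ℝ) :
    gaussianPDFReal 0 v x * Real.exp (c * x)
      = (Real.sqrt (2 * π * v))⁻¹ * Real.exp (-(1/(2*(v:ℝ))) * x ^ 2 + c * x) := by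
  rw [gaussianPDFReal]
  rw [mul_assoc, ← Real.exp_add]
  congr 2
  field_simp
  ring

lemma integrable_exp_mul_gauss (v : ℝ≥0) (hv : v ≠ 0) (c : ℝ) :
    Integrable (fun x => Real.exp (c * x)) (gaussianReal 0 v) := by
  have hvpos : (0:ℝ) < v := lt_of_le_of_ne v.coe_nonneg (by exact_mod_cast (Ne.symm hv))
  rw [gaussianReal_of_var_ne_zero _ hv, gaussianPDF_def]
  rw [integrable_withDensity_iff ((measurable_gaussianPDFReal 0 v).ennreal_ofReal)
    (ae_of_all _ fun x => ENNReal.ofReal_lt_top)]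
  have key := (real_exp_quad_integrable (b := 1/(2*(v:ℝ))) (by positivity) c).const_mul
    ((Real.sqrt (2 * π * v))⁻¹)
  apply key.congr
  filter_upwards with x
  rw [ENNReal.toReal_ofReal (gaussianPDFReal_nonneg 0 v x),
    mul_comm (Real.exp (c * x)) (gaussianPDFReal 0 v x), pdf_mul_exp v hvpos, mul_comm]

lemma integral_exp_mul_gauss (v : ℝ≥0) (hv : v ≠ 0) (c : ℝ) :
    ∫ x, Real.exp (c * x) ∂(gaussianReal 0 v) = Real.exp ((v:ℝ) * c ^ 2 / 2) := by
  have hvpos : (0:ℝ) < v := lt_of_le_of_ne v.coe_nonneg (by exact_mod_cast (Ne.symm hv))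
  rw [gaussianReal_of_var_ne_zero _ hv, gaussianPDF_def]
  have hd : (fun x => ENNReal.ofReal (gaussianPDFReal 0 v x))
      = fun x => ((Real.toNNReal (gaussianPDFReal 0 v x) : ℝ≥0) : ℝ≥0∞) := rfl
  rw [hd, integral_withDensity_eq_integral_smul
    ((measurable_gaussianPDFReal 0 v).real_toNNReal) _]
  have : (fun x => (Real.toNNReal (gaussianPDFReal 0 v x)) • Real.exp (c * x))
      = fun x => (Real.sqrt (2 * π * v))⁻¹ * Real.exp (-(1/(2*(v:ℝ))) * x ^ 2 + c * x) := by
    funext x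
    rw [NNReal.smul_def, smul_eq_mul, Real.coe_toNNReal _ (gaussianPDFReal_nonneg 0 v x),
      pdf_mul_exp v hvpos]
  rw [this, integral_const_mul, real_exp_quad_integral (by positivity) c]
  rw [show π / (1/(2*(v:ℝ))) = 2 * π * v by field_simp,
    show c ^ 2 / (4 * (1/(2*(v:ℝ)))) = (v:ℝ) * c ^ 2 / 2 by field_simp; ring]
  rw [← mul_assoc, inv_mul_cancel₀ (by positivity), one_mul]

end

lemma mgf_sum {E : Type*} (h : ℝ) (hh : 0 < h)
    (μ : Measure (E → ℝ)) [IsProbabilityMeasure μ]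
    (hμ : ∀ S : Finset E,
      μ.map (fun x (i : S) => x i) =
        Measure.pi fun _ : S => gaussianReal 0 (h / 2).toNNReal)
    (c : E → ℝ) (S : Finset E) :
    Integrable (fun x : E → ℝ => Real.exp (∑ j ∈ S, c j * x j)) μ ∧
    ∫ x, Real.exp (∑ j ∈ S, c j * x j) ∂μ = Real.exp ((h/4) * ∑ j ∈ S, (c j)^2) := by
  set v : ℝ≥0 := (h/2).toNNReal with hv_def
  have hvco : (v:ℝ) = h/2 := Real.coe_toNNReal _ (by positivity)
  have hv : v ≠ 0 := by
    intro hcon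
    rw [hcon] at hvco
    simp at hvco; linarith
  letI : MeasureSpace ℝ := ⟨gaussianReal 0 v⟩
  haveI : IsProbabilityMeasure (volume : Measure ℝ) :=
    inferInstanceAs (IsProbabilityMeasure (gaussianReal 0 v))
  set g : (S → ℝ) → ℝ := fun y => ∏ j : S, Real.exp (c j * y j) with hg_def
  have hpi : Measure.pi (fun _ : S => gaussianReal 0 v) = (volume : Measure (S → ℝ)) :=
    (volume_pi).symm
  have hg_meas : Measurable g := by
    apply Finset.measurable_prod
    intro i _
    exact (measurable_const.mul (measurable_pi_apply i)).exp
  have hg_int : Integrable g (Measure.pi fun _ : S => gaussianReal 0 v) := by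
    rw [hpi]
    exact Integrable.fintype_prod (f := fun (j : S) (y : ℝ) => Real.exp (c j * y))
      (fun j => integrable_exp_mul_gauss v hv (c j))
  have hproj : Measurable (fun x : E → ℝ => fun i : S => x i) :=
    measurable_pi_lambda _ fun i => measurable_pi_apply _
  have hcomp : (fun x : E → ℝ => Real.exp (∑ j ∈ S, c j * x j))
      = g ∘ (fun x (i : S) => x i) := by
    funext x
    simp only [hg_def, Function.comp_apply, Real.exp_sum]
    rw [← Finset.prod_coe_sort S (fun j => Real.exp (c j * x j))]
  have hmap := hμ S
  constructor
  · rw [hcomp]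
    apply (integrable_map_measure hg_meas.aestronglyMeasurable hproj.aemeasurable).mp
    rw [hmap]
    exact hg_int
  · rw [hcomp]
    have := integral_map (φ := fun x (i : S) => x i) (μ := μ) hproj.aemeasurable
      (f := g) (by rw [hmap]; exact hg_meas.aestronglyMeasurable)
    rw [Function.comp_def, ← this, hmap,
      integral_fintype_prod_eq_prod (f := fun (j : S) (y : ℝ) => Real.exp (c j * y))]
    have : ∀ j : S, ∫ y, Real.exp (c j * y) ∂(gaussianReal 0 v) = Real.exp ((v:ℝ) * (c j) ^ 2 / 2) :=
      fun j => integral_exp_mul_gauss v hv (c j)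
    rw [Finset.prod_congr rfl (fun j _ => this j), ← Real.exp_sum]
    congr 1
    rw [← Finset.sum_coe_sort S (fun j => (c j)^2), Finset.mul_sum]
    apply Finset.sum_congr rfl
    intro j _
    rw [hvco]
    ring

lemma abs_rpow_le_exp_add (q : ℝ) (hq : 1 ≤ q) (u : ℝ) :
    |u| ^ q ≤ (Nat.ceil q).factorial * (Real.exp u + Real.exp (-u)) := by
  have hq0 : (0:ℝ) ≤ q := by linarith
  have hfac1 : (1:ℝ) ≤ (Nat.ceil q).factorial := by exact_mod_cast (Nat.ceil q).factorial_pos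
  have hexp_abs : Real.exp |u| ≤ Real.exp u + Real.exp (-u) := by
    rcases abs_cases u with ⟨he, _⟩ | ⟨he, _⟩ <;> rw [he] <;>
      [linarith [Real.exp_pos (-u)]; linarith [Real.exp_pos u]]
  have h1exp : (1:ℝ) ≤ Real.exp |u| := Real.one_le_exp (abs_nonneg u)
  rcases le_total |u| 1 with hu | hu
  · calc |u| ^ q ≤ 1 := Real.rpow_le_one (abs_nonneg u) hu hq0
    _ ≤ (Nat.ceil q).factorial * (Real.exp u + Real.exp (-u)) := by
        have := le_trans h1exp hexp_abs
        nlinarith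
  · set n := Nat.ceil q
    calc |u| ^ q ≤ |u| ^ (n : ℝ) :=
          Real.rpow_le_rpow_of_exponent_le hu (Nat.le_ceil q)
    _ = |u| ^ n := Real.rpow_natCast _ n
    _ ≤ n.factorial * Real.exp |u| := by
        have key := Real.sum_le_exp_of_nonneg (abs_nonneg u) (n + 1)
        have hterm : |u| ^ n / n.factorial ≤ Real.exp |u| := by
          refine le_trans ?_ key
          apply Finset.single_le_sum (f := fun i => |u| ^ i / (Nat.factorial i : ℝ))
            (fun i _ => by positivity) (Finset.self_mem_range_succ n)
        rw [div_le_iff₀ (by positivity : (0:ℝ) < (n.factorial : ℝ))] at hterm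
        linarith [hterm]
    _ ≤ n.factorial * (Real.exp u + Real.exp (-u)) := by
        have : (0:ℝ) < n.factorial := by positivity
        nlinarith

lemma real_moment {E : Type*} (h : ℝ) (hh : 0 < h)
    (μ : Measure (E → ℝ)) [IsProbabilityMeasure μ]
    (hμ : ∀ S : Finset E,
      μ.map (fun x (i : S) => x i) =
        Measure.pi fun _ : S => gaussianReal 0 (h / 2).toNNReal)
    (c : E → ℝ) (S : Finset E) (q : ℝ) (hq : 1 ≤ q) :
    Integrable (fun x : E → ℝ => |∑ j ∈ S, c j * x j| ^ q) μ ∧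
    ∫ x, |∑ j ∈ S, c j * x j| ^ q ∂μ ≤
      2 * (Nat.ceil q).factorial * Real.exp (h/4) * (∑ j ∈ S, (c j)^2) ^ (q/2) := by
  have hq0 : (0:ℝ) < q := by linarith
  have hσ2nn : (0:ℝ) ≤ ∑ j ∈ S, (c j)^2 := Finset.sum_nonneg fun j _ => sq_nonneg _
  rcases eq_or_lt_of_le hσ2nn with hzero | hσ2pos
  · -- degenerate case: all coefficients vanish on S
    have hc : ∀ j ∈ S, c j = 0 := by
      intro j hj
      have := (Finset.sum_eq_zero_iff_of_nonneg (fun j _ => sq_nonneg (c j))).mp hzero.symm j hj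
      exact pow_eq_zero_iff (by norm_num) |>.mp this
    have hfun : (fun x : E → ℝ => |∑ j ∈ S, c j * x j| ^ q) = fun _ => 0 := by
      funext x
      rw [Finset.sum_congr rfl (fun j hj => by rw [hc j hj, zero_mul]), Finset.sum_const_zero,
        abs_zero, Real.zero_rpow hq0.ne']
    rw [hfun, ← hzero, Real.zero_rpow (by positivity : q/2 ≠ 0)]
    simp [integrable_const]
  · set σ2 := ∑ j ∈ S, (c j)^2 with hσ2_def
    set σ := σ2 ^ (1/2 : ℝ) with hσ_def
    have hσpos : 0 < σ := Real.rpow_pos_of_pos hσ2pos _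
    have hσsq : σ ^ 2 = σ2 := by
      rw [hσ_def, ← Real.rpow_natCast (σ2 ^ (1/2:ℝ)) 2, ← Real.rpow_mul hσ2nn]
      norm_num
    set d : E → ℝ := fun j => c j / σ with hd_def
    have hsum_d : ∑ j ∈ S, (d j)^2 = 1 := by
      simp only [hd_def, div_pow, ← Finset.sum_div]
      rw [hσsq, div_self hσ2pos.ne']
    set n := Nat.ceil q
    set u : (E → ℝ) → ℝ := fun x => ∑ j ∈ S, d j * x j with hu_def
    have hXu : ∀ x, ∑ j ∈ S, c j * x j = σ * u x := by
      intro x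
      rw [hu_def, Finset.mul_sum]
      exact Finset.sum_congr rfl fun j _ => by rw [hd_def]; field_simp
    have mgfp := mgf_sum h hh μ hμ d S
    have mgfn := mgf_sum h hh μ hμ (fun j => -(d j)) S
    have hneg_fun : (fun x : E → ℝ => Real.exp (∑ j ∈ S, -(d j) * x j))
        = fun x => Real.exp (-(u x)) := by
      funext x; congr 1
      rw [hu_def, ← Finset.sum_neg_distrib]
      exact Finset.sum_congr rfl fun j _ => by ring
    have hint_n : Integrable (fun x : E → ℝ => Real.exp (-(u x))) μ := by
      rw [← hneg_fun]; exact mgfn.1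
    have hval_p : ∫ x, Real.exp (u x) ∂μ = Real.exp (h/4) := by
      rw [hu_def, mgfp.2, hsum_d, mul_one]
    have hval_n : ∫ x, Real.exp (-(u x)) ∂μ = Real.exp (h/4) := by
      rw [← hneg_fun, mgfn.2]
      congr 1
      rw [show ∑ j ∈ S, (-(d j))^2 = ∑ j ∈ S, (d j)^2 from
        Finset.sum_congr rfl fun j _ => by ring, hsum_d, mul_one]
    set G : (E → ℝ) → ℝ :=
      fun x => σ ^ q * ((n.factorial : ℝ) * (Real.exp (u x) + Real.exp (-(u x)))) with hG_def
    have hG_int : Integrable G μ := (((mgfp.1.add hint_n).const_mul _).const_mul _)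
    have hpt : ∀ x, |∑ j ∈ S, c j * x j| ^ q ≤ G x := by
      intro x
      rw [hXu x, abs_mul, abs_of_pos hσpos,
        Real.mul_rpow hσpos.le (abs_nonneg _)]
      exact mul_le_mul_of_nonneg_left (abs_rpow_le_exp_add q hq (u x))
        (Real.rpow_nonneg hσpos.le q)
    have hXmeas : Measurable (fun x : E → ℝ => ∑ j ∈ S, c j * x j) :=
      Finset.measurable_sum S fun j _ => measurable_const.mul (measurable_pi_apply j)
    have hrpow_cont : Continuous (fun t : ℝ => t ^ q) :=
      continuous_iff_continuousAt.mpr fun x => Real.continuousAt_rpow_const x q (Or.inr hq0.le)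
    have hmeas : AEStronglyMeasurable (fun x : E → ℝ => |∑ j ∈ S, c j * x j| ^ q) μ :=
      (hrpow_cont.measurable.comp hXmeas.abs).aestronglyMeasurable
    have hint : Integrable (fun x : E → ℝ => |∑ j ∈ S, c j * x j| ^ q) μ := by
      apply hG_int.mono' hmeas
      filter_upwards with x
      rw [Real.norm_eq_abs, abs_of_nonneg (Real.rpow_nonneg (abs_nonneg _) q)]
      exact hpt x
    refine ⟨hint, ?_⟩
    calc ∫ x, |∑ j ∈ S, c j * x j| ^ q ∂μ ≤ ∫ x, G x ∂μ :=
          integral_mono hint hG_int hpt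
    _ = σ ^ q * ((n.factorial : ℝ) * (Real.exp (h/4) + Real.exp (h/4))) := by
        rw [hG_def]
        rw [integral_const_mul, integral_const_mul, integral_add mgfp.1 hint_n, hval_p, hval_n]
    _ = 2 * (n.factorial : ℝ) * Real.exp (h/4) * σ2 ^ (q/2) := by
        rw [hσ_def, ← Real.rpow_mul hσ2nn]
        ring_nf

lemma ellSum_measurable {E : Type*} (a : E → ℂ) (S : Finset E) :
    Measurable (fun x : E → ℝ => ellSum a S x) := by
  apply Finset.measurable_sum
  intro j _
  exact (Complex.measurable_ofReal.comp (measurable_pi_apply j)).const_mul (a j)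

lemma complex_moment {E : Type*} (h : ℝ) (hh : 0 < h)
    (μ : Measure (E → ℝ)) [IsProbabilityMeasure μ]
    (hμ : ∀ S : Finset E,
      μ.map (fun x (i : S) => x i) =
        Measure.pi fun _ : S => gaussianReal 0 (h / 2).toNNReal)
    (a : E → ℂ) (S : Finset E) (q : ℝ) (hq : 1 ≤ q) :
    Integrable (fun x : E → ℝ => ‖ellSum a S x‖ ^ q) μ ∧
    ∫ x, ‖ellSum a S x‖ ^ q ∂μ ≤
      (2:ℝ)^q * (2 * (Nat.ceil q).factorial * Real.exp (h/4)) * 2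
        * (∑ j ∈ S, ‖a j‖^2) ^ (q/2) := by
  have hq0 : (0:ℝ) < q := by linarith
  set X : (E → ℝ) → ℝ := fun x => ∑ j ∈ S, (a j).re * x j with hX_def
  set Y : (E → ℝ) → ℝ := fun x => ∑ j ∈ S, (a j).im * x j with hY_def
  have hre : ∀ x, (ellSum a S x).re = X x := by
    intro x
    simp [ellSum, hX_def, Complex.mul_re]
  have him : ∀ x, (ellSum a S x).im = Y x := by
    intro x
    simp [ellSum, hY_def, Complex.mul_im]
  have hptnorm : ∀ x, ‖ellSum a S x‖ ≤ |X x| + |Y x| := by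
    intro x
    rw [← hre x, ← him x]
    exact Complex.norm_le_abs_re_add_abs_im _
  have hpt : ∀ x, ‖ellSum a S x‖ ^ q ≤ (2:ℝ)^q * (|X x| ^ q + |Y x| ^ q) := by
    intro x
    have h2 : ‖ellSum a S x‖ ^ q ≤ (|X x| + |Y x|) ^ q :=
      Real.rpow_le_rpow (norm_nonneg _) (hptnorm x) hq0.le
    have h3 : (|X x| + |Y x|) ^ q ≤ (2 * max (|X x|) (|Y x|)) ^ q := by
      apply Real.rpow_le_rpow (by positivity) _ hq0.le
      rw [two_mul]
      exact add_le_add (le_max_left _ _) (le_max_right _ _)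
    have h4 : (2 * max (|X x|) (|Y x|)) ^ q = (2:ℝ)^q * (max (|X x|) (|Y x|)) ^ q :=
      Real.mul_rpow (by norm_num) (le_max_of_le_left (abs_nonneg _))
    have h5 : (max (|X x|) (|Y x|)) ^ q ≤ |X x| ^ q + |Y x| ^ q := by
      rcases max_cases (|X x|) (|Y x|) with ⟨hm, _⟩ | ⟨hm, _⟩ <;> rw [hm]
      · nlinarith [Real.rpow_nonneg (abs_nonneg (Y x)) q]
      · nlinarith [Real.rpow_nonneg (abs_nonneg (X x)) q]
    calc ‖ellSum a S x‖ ^ q ≤ (2 * max (|X x|) (|Y x|)) ^ q := le_trans h2 h3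
    _ = (2:ℝ)^q * (max (|X x|) (|Y x|)) ^ q := h4
    _ ≤ (2:ℝ)^q * (|X x| ^ q + |Y x| ^ q) := by
        apply mul_le_mul_of_nonneg_left h5 (Real.rpow_nonneg (by norm_num) q)
  have hmX := real_moment h hh μ hμ (fun j => (a j).re) S q hq
  have hmY := real_moment h hh μ hμ (fun j => (a j).im) S q hq
  have hG_int : Integrable (fun x => (2:ℝ)^q * (|X x| ^ q + |Y x| ^ q)) μ :=
    (hmX.1.add hmY.1).const_mul _
  have hrpow_cont : Continuous (fun t : ℝ => t ^ q) :=
    continuous_iff_continuousAt.mpr fun x => Real.continuousAt_rpow_const x q (Or.inr hq0.le)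
  have hmeas : AEStronglyMeasurable (fun x : E → ℝ => ‖ellSum a S x‖ ^ q) μ :=
    (hrpow_cont.measurable.comp (ellSum_measurable a S).norm).aestronglyMeasurable
  have hint : Integrable (fun x : E → ℝ => ‖ellSum a S x‖ ^ q) μ := by
    apply hG_int.mono' hmeas
    filter_upwards with x
    rw [Real.norm_eq_abs, abs_of_nonneg (Real.rpow_nonneg (norm_nonneg _) q)]
    exact hpt x
  refine ⟨hint, ?_⟩
  have hA : ∀ j ∈ S, (a j).re ^ 2 ≤ ‖a j‖ ^ 2 ∧ (a j).im ^ 2 ≤ ‖a j‖ ^ 2 := by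
    intro j _
    have h1 : |(a j).re| ^ 2 ≤ ‖a j‖ ^ 2 :=
      pow_le_pow_left₀ (abs_nonneg _) (Complex.abs_re_le_norm _) 2
    have h2 : |(a j).im| ^ 2 ≤ ‖a j‖ ^ 2 :=
      pow_le_pow_left₀ (abs_nonneg _) (Complex.abs_im_le_norm _) 2
    rw [sq_abs] at h1 h2
    exact ⟨h1, h2⟩
  have hAnn : (0:ℝ) ≤ ∑ j ∈ S, ‖a j‖^2 := Finset.sum_nonneg fun j _ => sq_nonneg _
  have hXA : (∑ j ∈ S, ((a j).re)^2) ^ (q/2) ≤ (∑ j ∈ S, ‖a j‖^2) ^ (q/2) := by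
    apply Real.rpow_le_rpow (Finset.sum_nonneg fun j _ => sq_nonneg _)
      (Finset.sum_le_sum fun j hj => (hA j hj).1) (by positivity)
  have hYA : (∑ j ∈ S, ((a j).im)^2) ^ (q/2) ≤ (∑ j ∈ S, ‖a j‖^2) ^ (q/2) := by
    apply Real.rpow_le_rpow (Finset.sum_nonneg fun j _ => sq_nonneg _)
      (Finset.sum_le_sum fun j hj => (hA j hj).2) (by positivity)
  have h2q : (0:ℝ) ≤ (2:ℝ)^q := Real.rpow_nonneg (by norm_num) q
  have hfacpos : (0:ℝ) < (Nat.ceil q).factorial := by positivity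
  calc ∫ x, ‖ellSum a S x‖ ^ q ∂μ ≤ ∫ x, (2:ℝ)^q * (|X x| ^ q + |Y x| ^ q) ∂μ :=
        integral_mono hint hG_int hpt
  _ = (2:ℝ)^q * ((∫ x, |X x| ^ q ∂μ) + ∫ x, |Y x| ^ q ∂μ) := by
        rw [integral_const_mul, integral_add hmX.1 hmY.1]
  _ ≤ (2:ℝ)^q * ((2 * (Nat.ceil q).factorial * Real.exp (h/4) * (∑ j ∈ S, ‖a j‖^2) ^ (q/2))
        + 2 * (Nat.ceil q).factorial * Real.exp (h/4) * (∑ j ∈ S, ‖a j‖^2) ^ (q/2)) := by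
        apply mul_le_mul_of_nonneg_left _ h2q
        apply add_le_add
        · exact le_trans hmX.2 (by
            apply mul_le_mul_of_nonneg_left hXA (by positivity))
        · exact le_trans hmY.2 (by
            apply mul_le_mul_of_nonneg_left hYA (by positivity))
  _ = (2:ℝ)^q * (2 * (Nat.ceil q).factorial * Real.exp (h/4)) * 2
        * (∑ j ∈ S, ‖a j‖^2) ^ (q/2) := by ring

noncomputable def Kconst (q h : ℝ) : ℝ :=
  ((2:ℝ)^q * (2 * (Nat.ceil q).factorial * Real.exp (h/4)) * 2) ^ (1/q)

lemma Kconst_nonneg (q h : ℝ) : 0 ≤ Kconst q h := by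
  apply Real.rpow_nonneg
  have : (0:ℝ) < (Nat.ceil q).factorial := by positivity
  positivity

lemma ellSum_memLp {E : Type*} (h : ℝ) (hh : 0 < h)
    (μ : Measure (E → ℝ)) [IsProbabilityMeasure μ]
    (hμ : ∀ S : Finset E,
      μ.map (fun x (i : S) => x i) =
        Measure.pi fun _ : S => gaussianReal 0 (h / 2).toNNReal)
    (a : E → ℂ) (S : Finset E) (q : ℝ) (hq : 1 ≤ q) :
    MemLp (fun x => ellSum a S x) (ENNReal.ofReal q) μ := by
  have hq0 : (0:ℝ) < q := by linarith
  have hne0 : ENNReal.ofReal q ≠ 0 := by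
    simp [ENNReal.ofReal_eq_zero]; linarith
  have hnetop : ENNReal.ofReal q ≠ ⊤ := ENNReal.ofReal_ne_top
  have key := memLp_norm_rpow_iff (μ := μ) (q := ENNReal.ofReal q) (p := ENNReal.ofReal q)
    (ellSum_measurable a S).aestronglyMeasurable hne0 hnetop
  rw [ENNReal.div_self hne0 hnetop, ENNReal.toReal_ofReal hq0.le] at key
  apply key.mp
  rw [memLp_one_iff_integrable]
  exact (complex_moment h hh μ hμ a S q hq).1

lemma ellSum_eLpNorm_le {E : Type*} (h : ℝ) (hh : 0 < h)
    (μ : Measure (E → ℝ)) [IsProbabilityMeasure μ]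
    (hμ : ∀ S : Finset E,
      μ.map (fun x (i : S) => x i) =
        Measure.pi fun _ : S => gaussianReal 0 (h / 2).toNNReal)
    (a : E → ℂ) (S : Finset E) (q : ℝ) (hq : 1 ≤ q) :
    eLpNorm (fun x => ellSum a S x) (ENNReal.ofReal q) μ ≤
      ENNReal.ofReal (Kconst q h * (∑ j ∈ S, ‖a j‖^2) ^ ((1:ℝ)/2)) := by
  have hq0 : (0:ℝ) < q := by linarith
  have hne0 : ENNReal.ofReal q ≠ 0 := by
    simp [ENNReal.ofReal_eq_zero]; linarith
  have hmem := ellSum_memLp h hh μ hμ a S q hq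
  rw [hmem.eLpNorm_eq_integral_rpow_norm hne0 ENNReal.ofReal_ne_top,
    ENNReal.toReal_ofReal hq0.le]
  apply ENNReal.ofReal_le_ofReal
  set D : ℝ := (2:ℝ)^q * (2 * (Nat.ceil q).factorial * Real.exp (h/4)) * 2 with hD_def
  have hDnn : 0 ≤ D := by
    have : (0:ℝ) < (Nat.ceil q).factorial := by positivity
    positivity
  have hAnn : (0:ℝ) ≤ ∑ j ∈ S, ‖a j‖^2 := Finset.sum_nonneg fun j _ => sq_nonneg _
  have hint_nonneg : 0 ≤ ∫ x, ‖ellSum a S x‖ ^ q ∂μ :=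
    integral_nonneg fun x => Real.rpow_nonneg (norm_nonneg _) q
  calc (∫ x, ‖ellSum a S x‖ ^ q ∂μ) ^ q⁻¹
      ≤ (D * (∑ j ∈ S, ‖a j‖^2) ^ (q/2)) ^ q⁻¹ :=
        Real.rpow_le_rpow hint_nonneg ((complex_moment h hh μ hμ a S q hq).2)
          (by positivity)
  _ = Kconst q h * (∑ j ∈ S, ‖a j‖^2) ^ ((1:ℝ)/2) := by
      rw [Real.mul_rpow hDnn (Real.rpow_nonneg hAnn _), Kconst, ← Real.rpow_mul hAnn,
        show q / 2 * q⁻¹ = 1/2 by field_simp, one_div]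
      rw [hD_def, one_div]

lemma lp_limit {E : Type*} (h : ℝ) (hh : 0 < h)
    (μ : Measure (E → ℝ)) [IsProbabilityMeasure μ]
    (hμ : ∀ S : Finset E,
      μ.map (fun x (i : S) => x i) =
        Measure.pi fun _ : S => gaussianReal 0 (h / 2).toNNReal)
    (a : E → ℂ) (ha2 : Summable fun j => ‖a j‖^2)
    (F : ℕ → Finset E) (hFmono : Monotone F) (hFexh : ∀ j : E, ∃ n, j ∈ F n)
    (q : ℝ) (hq : 1 ≤ q) :
    ∃ g : (E → ℝ) → ℂ, MemLp g (ENNReal.ofReal q) μ ∧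
      Tendsto (fun n => eLpNorm (fun x => ellSum a (F n) x - g x) (ENNReal.ofReal q) μ)
        atTop (nhds 0) := by
  classical
  haveI : Fact (1 ≤ ENNReal.ofReal q) := ⟨ENNReal.one_le_ofReal.mpr hq⟩
  set p : ℝ≥0∞ := ENNReal.ofReal q with hp_def
  have hmem : ∀ n, MemLp (fun x => ellSum a (F n) x) p μ :=
    fun n => ellSum_memLp h hh μ hμ a (F n) q hq
  set fL : ℕ → Lp ℂ p μ := fun n => (hmem n).toLp with hfL_def
  set A : ℝ := ∑' j, ‖a j‖^2 with hA_def
  have hpartial : Tendsto (fun N => ∑ j ∈ F N, ‖a j‖^2) atTop (nhds A) :=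
    ha2.hasSum.comp (tendsto_atTop_finset_of_monotone hFmono hFexh)
  set τ : ℕ → ℝ := fun N => A - ∑ j ∈ F N, ‖a j‖^2 with hτ_def
  have hτnn : ∀ N, 0 ≤ τ N := fun N =>
    sub_nonneg.mpr (ha2.sum_le_tsum (F N) (fun j _ => sq_nonneg _))
  have hτ0 : Tendsto τ atTop (nhds 0) := by
    have := (tendsto_const_nhds (x := A) (f := (atTop : Filter ℕ))).sub hpartial
    simpa using this
  set K : ℝ := Kconst q h with hK_def
  have hKnn : 0 ≤ K := Kconst_nonneg q h
  -- the key tail bound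
  have hdiff : ∀ m n, m ≤ n → (fun x => ellSum a (F n) x - ellSum a (F m) x)
      = fun x => ellSum a (F n \ F m) x := by
    intro m n hmn
    funext x
    classical
    simp only [ellSum]
    rw [Finset.sum_sdiff_eq_sub (hFmono hmn)]
  have htail : ∀ N m n, N ≤ m → m ≤ n → ∑ j ∈ F n \ F m, ‖a j‖^2 ≤ τ N := by
    intro N m n hNm hmn
    classical
    have hdisj : Disjoint (F n \ F m) (F N) :=
      Finset.sdiff_disjoint.mono_right (hFmono hNm)
    have hle : ∑ j ∈ (F n \ F m) ∪ F N, ‖a j‖^2 ≤ A :=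
      ha2.sum_le_tsum _ (fun j _ => sq_nonneg _)
    rw [Finset.sum_union hdisj] at hle
    have := ha2.sum_le_tsum (F N) (fun j _ => sq_nonneg (‖a j‖))
    simp only [hτ_def]
    linarith
  have hbound : ∀ N m n, N ≤ m → m ≤ n →
      dist (fL n) (fL m) ≤ K * τ N ^ ((1:ℝ)/2) := by
    intro N m n hNm hmn
    rw [hfL_def, dist_eq_norm, ← MemLp.toLp_sub, Lp.norm_toLp]
    have heq : eLpNorm ((fun x => ellSum a (F n) x) - fun x => ellSum a (F m) x) p μ
        = eLpNorm (fun x => ellSum a (F n \ F m) x) p μ := by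
      apply eLpNorm_congr_ae
      filter_upwards with x
      have := congrFun (hdiff m n hmn) x
      simpa using this
    rw [heq]
    have hb := ellSum_eLpNorm_le h hh μ hμ a (F n \ F m) q hq
    have htoReal := ENNReal.toReal_mono ENNReal.ofReal_ne_top hb
    rw [ENNReal.toReal_ofReal (mul_nonneg hKnn (Real.rpow_nonneg (Finset.sum_nonneg fun j _ => sq_nonneg _) _))] at htoReal
    · refine le_trans htoReal ?_
      apply mul_le_mul_of_nonneg_left _ hKnn
      exact Real.rpow_le_rpow (Finset.sum_nonneg fun j _ => sq_nonneg _)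
        (htail N m n hNm hmn) (by norm_num)
  have hcauchy : CauchySeq fL := by
    apply cauchySeq_of_le_tendsto_0 (fun N => K * τ N ^ ((1:ℝ)/2))
    · intro n m N hn hm
      rcases le_total m n with hmn | hnm
      · exact hbound N m n hm hmn
      · rw [dist_comm]; exact hbound N n m hn hnm
    · have h1 : Tendsto (fun N => τ N ^ ((1:ℝ)/2)) atTop (nhds 0) := by
        have hc := (Real.continuousAt_rpow_const 0 ((1:ℝ)/2) (Or.inr (by norm_num))).tendsto
        have := hc.comp hτ0
        simpa [Function.comp_def, Real.zero_rpow (by norm_num : ((1:ℝ)/2) ≠ 0)] using this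
      simpa using h1.const_mul K
  obtain ⟨gL, hgL⟩ := cauchySeq_tendsto_of_complete hcauchy
  refine ⟨⇑gL, Lp.memLp gL, ?_⟩
  have hconv := (Lp.tendsto_Lp_iff_tendsto_eLpNorm' fL gL).mp hgL
  apply hconv.congr
  intro n
  apply eLpNorm_congr_ae
  filter_upwards [(hmem n).coeFn_toLp] with x hx
  simp [hfL_def, hx]

/-- **Theorem 2.6, `L^p` part.**  Let `E` be countable, `h > 0`, `a ∈ ℓ²(E, ℂ)` and let
`μ = μ_{E,h}^K` be the product over `E` of the Gaussian measures `N(0, h/2)`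
(characterized by its finite-dimensional marginals).  If `(F_n)` is an increasing
exhausting sequence of finite subsets of `E`, then for every real `1 ≤ p < ∞` each
`ℓ_{a,F_n}` belongs to `L^p(μ)` and the sequence `(ℓ_{a,F_n})` converges in `L^p(μ)` to
the function `ℓ_a` that is its `L²` limit. -/
theorem ell_a_Lp_limit
    (E : Type*) [Countable E] (h : ℝ) (hh : 0 < h)
    (μ : Measure (E → ℝ)) [IsProbabilityMeasure μ]
    (hμ : ∀ S : Finset E,
      μ.map (fun x (i : S) => x i) =
        Measure.pi fun _ : S => gaussianReal 0 (h / 2).toNNReal)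
    (a : E → ℂ) (ha : Memℓp a 2)
    (F : ℕ → Finset E) (hFmono : Monotone F) (hFexh : ∀ j : E, ∃ n, j ∈ F n) :
    ∃ ℓa : (E → ℝ) → ℂ, MemLp ℓa 2 μ ∧
      Tendsto (fun n => eLpNorm (fun x => ellSum a (F n) x - ℓa x) 2 μ)
        atTop (nhds 0) ∧
      ∀ p : ℝ, 1 ≤ p →
        (∀ n, MemLp (fun x => ellSum a (F n) x) (ENNReal.ofReal p) μ) ∧
        Tendsto (fun n =>
            eLpNorm (fun x => ellSum a (F n) x - ℓa x) (ENNReal.ofReal p) μ)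
          atTop (nhds 0) := by
  have ha2 : Summable fun j => ‖a j‖^2 := by
    have hs := Memℓp.summable (p := 2) (by norm_num) ha
    apply hs.congr
    intro j
    norm_num
  have h2 : ENNReal.ofReal (2:ℝ) = (2:ℝ≥0∞) := by norm_num
  obtain ⟨ℓa, hℓa_mem, hℓa_conv⟩ := lp_limit h hh μ hμ a ha2 F hFmono hFexh 2 one_le_two
  rw [h2] at hℓa_mem hℓa_conv
  have hmeasla : AEStronglyMeasurable ℓa μ := hℓa_mem.aestronglyMeasurable
  have hms : ∀ n, AEStronglyMeasurable (fun x => ellSum a (F n) x) μ :=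
    fun n => (ellSum_measurable a (F n)).aestronglyMeasurable
  refine ⟨ℓa, hℓa_mem, hℓa_conv, ?_⟩
  intro p hp
  refine ⟨fun n => ellSum_memLp h hh μ hμ a (F n) p hp, ?_⟩
  set r : ℝ := max p 2 with hr_def
  have hr1 : (1:ℝ) ≤ r := le_trans hp (le_max_left _ _)
  obtain ⟨g, hg_mem, hg_conv⟩ := lp_limit h hh μ hμ a ha2 F hFmono hFexh r hr1
  have hmeasg : AEStronglyMeasurable g μ := hg_mem.aestronglyMeasurable
  have h2r : (2:ℝ≥0∞) ≤ ENNReal.ofReal r := by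
    rw [← h2]; exact ENNReal.ofReal_le_ofReal (le_max_right _ _)
  have hpr : ENNReal.ofReal p ≤ ENNReal.ofReal r :=
    ENNReal.ofReal_le_ofReal (le_max_left _ _)
  have hconv2g : Tendsto (fun n => eLpNorm (fun x => ellSum a (F n) x - g x) 2 μ)
      atTop (nhds 0) := by
    apply tendsto_of_tendsto_of_tendsto_of_le_of_le tendsto_const_nhds hg_conv
      (fun n => zero_le)
    exact fun n => eLpNorm_le_eLpNorm_of_exponent_le h2r ((hms n).sub hmeasg)
  have hdiff0 : eLpNorm (fun x => ℓa x - g x) 2 μ = 0 := by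
    have htri : ∀ n, eLpNorm (fun x => ℓa x - g x) 2 μ ≤
        eLpNorm (fun x => ellSum a (F n) x - ℓa x) 2 μ
          + eLpNorm (fun x => ellSum a (F n) x - g x) 2 μ := by
      intro n
      have hadd := eLpNorm_add_le (μ := μ) (p := 2)
        (f := fun x => ℓa x - ellSum a (F n) x)
        (g := fun x => ellSum a (F n) x - g x)
        (hmeasla.sub (hms n)) ((hms n).sub hmeasg) one_le_two
      have hfun : ((fun x => ℓa x - ellSum a (F n) x)
          + fun x => ellSum a (F n) x - g x) = fun x => ℓa x - g x := by
        funext x; simp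
      rw [hfun] at hadd
      refine le_trans hadd ?_
      apply add_le_add_left
      apply le_of_eq
      exact eLpNorm_sub_comm _ _ _ _
    have hsum : Tendsto (fun n =>
        eLpNorm (fun x => ellSum a (F n) x - ℓa x) 2 μ
          + eLpNorm (fun x => ellSum a (F n) x - g x) 2 μ) atTop (nhds 0) := by
      have := hℓa_conv.add hconv2g
      simpa using this
    have hle := le_of_tendsto_of_tendsto' tendsto_const_nhds hsum htri
    exact le_zero_iff.mp hle
  have hae : ℓa =ᵐ[μ] g := by
    have := (eLpNorm_eq_zero_iff (hmeasla.sub hmeasg) two_ne_zero).mp hdiff0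
    filter_upwards [this] with x hx
    exact sub_eq_zero.mp hx
  have hcongr : ∀ n, eLpNorm (fun x => ellSum a (F n) x - ℓa x) (ENNReal.ofReal p) μ
      = eLpNorm (fun x => ellSum a (F n) x - g x) (ENNReal.ofReal p) μ := by
    intro n
    apply eLpNorm_congr_ae
    filter_upwards [hae] with x hx
    rw [hx]
  rw [show (fun n => eLpNorm (fun x => ellSum a (F n) x - ℓa x) (ENNReal.ofReal p) μ)
      = fun n => eLpNorm (fun x => ellSum a (F n) x - g x) (ENNReal.ofReal p) μ
    from funext hcongr]
  apply tendsto_of_tendsto_of_tendsto_of_le_of_le tendsto_const_nhds hg_conv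
    (fun n => zero_le)
  exact fun n => eLpNorm_le_eLpNorm_of_exponent_le hpr ((hms n).sub hmeasg)
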